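/- Let q be an odd prime, n ≥ 4, λ ∈ (ℤ/qℤ)*, and 𝒜, ℬ ⊆ (ℤ/qℤ)ⁿ. Let I_λ(𝒜,ℬ) be the number of pairs (a,b) ∈ 𝒜 × ℬ with a₁b₁ + ⋯ + aₙbₙ = λ. Then |I_λ(𝒜,ℬ) − |𝒜||ℬ|/(q(1−q^{−n}))| ≪ q^{n−1} q^{−(n−3)/4} √(|𝒜||ℬ|), with an absolute implied constant. -/

import Mathlib

set_option maxHeartbeats 1000000
set_option linter.unusedVariables false
set_option linter.unusedSectionVars false
open Finset

variable {G H : Type*} [AddCommGroup G] [AddCommGroup H] [Fintype G] [DecidableEq G] [DecidableEq H]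

lemma fiber_card_eq (f : G →+ H) {y : H} {x₀ : G} (hx₀ : f x₀ = y) :
    (Finset.univ.filter fun x => f x = y).card
      = (Finset.univ.filter fun x => f x = 0).card := by
  apply Finset.card_bij' (fun x _ => x - x₀) (fun x _ => x + x₀)
  · intro a ha
    simp only [mem_filter, mem_univ, true_and] at ha ⊢
    simp [map_sub, ha, hx₀]
  · intro a ha
    simp only [mem_filter, mem_univ, true_and] at ha ⊢
    simp [map_add, ha, hx₀]
  · intro a _; simp
  · intro a _; simp

lemma card_image_mul_fiber (f : G →+ H) :
    (Finset.univ.image f).card * (Finset.univ.filter fun x => f x = 0).card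
      = Fintype.card G := by
  classical
  have key := Finset.card_eq_sum_card_fiberwise
      (f := f) (s := (Finset.univ : Finset G)) (t := Finset.univ.image f)
      (fun x _ => Finset.mem_image_of_mem f (Finset.mem_univ x))
  have h : ∀ y ∈ Finset.univ.image f,
      (Finset.univ.filter fun x => f x = y).card
        = (Finset.univ.filter fun x => f x = 0).card := by
    intro y hy
    obtain ⟨x₀, -, hx₀⟩ := Finset.mem_image.1 hy
    exact fiber_card_eq f hx₀
  rw [Finset.sum_congr rfl h, Finset.sum_const, smul_eq_mul] at key
  rw [← key, Finset.card_univ]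

lemma fiber_card_surj [Fintype H] (f : G →+ H) (hf : Function.Surjective f) (y : H) :
    (Finset.univ.filter fun x => f x = y).card * Fintype.card H = Fintype.card G := by
  have h1 : (Finset.univ.image f) = Finset.univ := by
    apply Finset.eq_univ_of_forall
    intro z
    obtain ⟨x, hx⟩ := hf z
    exact Finset.mem_image.2 ⟨x, Finset.mem_univ x, hx⟩
  obtain ⟨x₀, hx₀⟩ := hf y
  rw [fiber_card_eq f hx₀, mul_comm, ← Finset.card_univ (α := H), ← h1]
  exact card_image_mul_fiber f

section zmod
variable {q n : ℕ} [Fact (Nat.Prime q)]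

/-- Dot product with fixed `b` as an `AddMonoidHom` in the variable. -/
def dotHom (b : Fin n → ZMod q) : (Fin n → ZMod q) →+ ZMod q where
  toFun a := ∑ i, a i * b i
  map_zero' := by simp
  map_add' a a' := by
    simp [add_mul, Finset.sum_add_distrib]

lemma exists_ne_zero {b : Fin n → ZMod q} (hb : b ≠ 0) : ∃ j, b j ≠ 0 := by
  by_contra h
  push_neg at h
  exact hb (funext h)

lemma dot_comb (a₀ w : Fin n → ZMod q) (s t : ZMod q) (i0 : Fin n) :
    ∑ i, (s * a₀ i + (if i = i0 then t else 0)) * w i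
      = s * (∑ i, a₀ i * w i) + t * w i0 := by
  have h1 : ∀ i, (s * a₀ i + (if i = i0 then t else 0)) * w i
      = s * (a₀ i * w i) + (if i = i0 then t * w i else 0) := by
    intro i
    by_cases hi : i = i0 <;> simp [hi] <;> ring
  rw [Finset.sum_congr rfl fun i _ => h1 i, Finset.sum_add_distrib, ← Finset.mul_sum,
    Finset.sum_ite_eq' Finset.univ i0 fun i => t * w i]
  simp

lemma dot_surj {b : Fin n → ZMod q} (hb : b ≠ 0) :
    Function.Surjective (dotHom b) := by
  obtain ⟨j, hj⟩ := exists_ne_zero hb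
  intro μ
  refine ⟨fun i => if i = j then μ * (b j)⁻¹ else 0, ?_⟩
  simp only [dotHom, AddMonoidHom.coe_mk, ZeroHom.coe_mk, ite_mul, zero_mul]
  rw [Finset.sum_ite_eq' Finset.univ j fun i => μ * (b j)⁻¹ * b i]
  simp [mul_assoc, inv_mul_cancel₀ hj]

lemma card_V : Fintype.card (Fin n → ZMod q) = q ^ n := by
  haveI : NeZero q := ⟨(Fact.out : Nat.Prime q).ne_zero⟩
  simp [ZMod.card]

/-- Single linear equation fiber count. -/
lemma fiber_single (hn : 1 ≤ n) {b : Fin n → ZMod q} (hb : b ≠ 0) (μ : ZMod q) :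
    (Finset.univ.filter fun a : Fin n → ZMod q => ∑ i, a i * b i = μ).card
      = q ^ (n - 1) := by
  haveI : NeZero q := ⟨(Fact.out : Nat.Prime q).ne_zero⟩
  have e1 : (Finset.univ.filter fun a : Fin n → ZMod q => ∑ i, a i * b i = μ)
      = Finset.univ.filter fun a => dotHom b a = μ :=
    Finset.filter_congr (fun x _ => by simp [dotHom])
  have key := fiber_card_surj (dotHom b) (dot_surj hb) μ
  rw [card_V, ZMod.card] at key
  have hq : 0 < q := (Fact.out : Nat.Prime q).pos
  have hpow : q ^ n = q ^ (n - 1) * q := by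
    rw [← pow_succ, Nat.sub_add_cancel hn]
  rw [e1]
  exact Nat.eq_of_mul_eq_mul_right hq (by rw [key, hpow])

/-- Pair of linear equations fiber bound. -/
lemma fiber_pair_le (hn : 2 ≤ n) {b c : Fin n → ZMod q} (hb : b ≠ 0) (hc : c ≠ 0)
    {lam : ZMod q} (hlam : lam ≠ 0) :
    (Finset.univ.filter fun a : Fin n → ZMod q =>
        (∑ i, a i * b i) = lam ∧ (∑ i, a i * c i) = 0).card ≤ q ^ (n - 2) := by
  haveI : NeZero q := ⟨(Fact.out : Nat.Prime q).ne_zero⟩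
  set f : (Fin n → ZMod q) →+ ZMod q × ZMod q := (dotHom b).prod (dotHom c) with hf
  have e1 : (Finset.univ.filter fun a : Fin n → ZMod q =>
        (∑ i, a i * b i) = lam ∧ (∑ i, a i * c i) = 0)
      = Finset.univ.filter fun a => f a = (lam, 0) :=
    Finset.filter_congr (fun x _ => by simp [hf, dotHom, AddMonoidHom.prod, Prod.ext_iff])
  rw [e1]
  rcases Finset.eq_empty_or_nonempty
      (Finset.univ.filter fun a : Fin n → ZMod q => f a = (lam, 0)) with he | ⟨a₀, ha₀⟩
  · simp [he]
  · have ha₀' : f a₀ = (lam, 0) := (Finset.mem_filter.1 ha₀).2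
    obtain ⟨i0, hi0⟩ := exists_ne_zero hc
    have hsurj : Function.Surjective f := by
      rintro ⟨x, y⟩
      set t := y * (c i0)⁻¹ with ht
      set s := (x - t * b i0) * lam⁻¹ with hs
      refine ⟨fun i => s * a₀ i + (if i = i0 then t else 0), ?_⟩
      have hdb : dotHom b a₀ = lam := by
        have := congrArg Prod.fst ha₀'; simpa [hf] using this
      have hdc : dotHom c a₀ = 0 := by
        have := congrArg Prod.snd ha₀'; simpa [hf] using this
      simp only [hf, AddMonoidHom.prod_apply, Prod.ext_iff]
      constructor
      · show (∑ i, (s * a₀ i + (if i = i0 then t else 0)) * b i) = x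
        rw [dot_comb]
        have h2 : (∑ i, a₀ i * b i) = lam := hdb
        have h3 : s * lam = x - t * b i0 := by
          rw [hs, mul_assoc, inv_mul_cancel₀ hlam, mul_one]
        rw [h2, h3]; ring
      · show (∑ i, (s * a₀ i + (if i = i0 then t else 0)) * c i) = y
        rw [dot_comb]
        have h2 : (∑ i, a₀ i * c i) = 0 := hdc
        have h3 : t * c i0 = y := by
          rw [ht, mul_assoc, inv_mul_cancel₀ hi0, mul_one]
        rw [h2, h3]; ring
    have key := fiber_card_surj f hsurj (lam, 0)
    rw [card_V] at key
    have hcardH : Fintype.card (ZMod q × ZMod q) = q ^ 2 := by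
      simp [ZMod.card, sq]
    rw [hcardH] at key
    have hq : 0 < q ^ 2 := pow_pos (Fact.out : Nat.Prime q).pos 2
    have hpow : q ^ n = q ^ (n - 2) * q ^ 2 := by
      rw [← pow_add, Nat.sub_add_cancel hn]
    exact le_of_eq (Nat.eq_of_mul_eq_mul_right hq (by rw [key, hpow]))

end zmod

theorem stmt14_aux_real {ι : Type*} [Fintype ι] [DecidableEq ι] (q n : ℕ) (hq3 : 3 ≤ q) (hn : 4 ≤ n)
    (hcard : Fintype.card ι = q ^ n)
    (N : ι → ℕ) (A : Finset ι) (cB m I : ℕ)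
    (hBle : cB ≤ q ^ n) (hm1 : m ≤ cB) (hm2 : cB ≤ m + 1)
    (hI : I = ∑ a ∈ A, N a)
    (hSN : ∑ a : ι, N a = m * q ^ (n - 1))
    (hSN2 : ∑ a : ι, N a * N a ≤ m * q ^ (n - 1) + cB * cB * q ^ (n - 2)) :
    |(I : ℝ) - (A.card : ℝ) * cB / ((q : ℝ) * (1 - ((q : ℝ))⁻¹ ^ n))|
      ≤ 3 * (q : ℝ) ^ (n - 1) * ((q : ℝ) ^ (n - 3)) ^ (-(1 : ℝ) / 4)
          * Real.sqrt ((A.card : ℝ) * cB) := by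
  classical
  set K : ℝ := (q : ℝ) with hKdef
  have hK3 : (3 : ℝ) ≤ K := by rw [hKdef]; exact_mod_cast hq3
  have hK0 : (0 : ℝ) < K := by linarith
  have hK1 : (1 : ℝ) < K := by linarith
  have hP : (0 : ℝ) < K ^ (n - 2) := pow_pos hK0 _
  have hcB0 : (0 : ℝ) ≤ (cB : ℝ) := Nat.cast_nonneg _
  have hcA0 : (0 : ℝ) ≤ (A.card : ℝ) := Nat.cast_nonneg _
  have hm1r : (m : ℝ) ≤ cB := by exact_mod_cast hm1
  have hm2r : (cB : ℝ) ≤ m + 1 := by exact_mod_cast hm2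
  have hm0 : (0 : ℝ) ≤ (m : ℝ) := Nat.cast_nonneg _
  have en1 : n - 1 = (n - 2) + 1 := by omega
  have en : n = 2 + (n - 2) := by omega
  have en' : n = 1 + (n - 1) := by omega
  have hKn1 : K ^ (n - 1) = K ^ (n - 2) * K := by rw [en1, pow_succ]
  have hKn : K ^ n = K ^ 2 * K ^ (n - 2) := by nth_rewrite 1 [en]; rw [pow_add]
  have hKn' : K ^ n = K * K ^ (n - 1) := by nth_rewrite 1 [en']; rw [pow_add, pow_one]
  set c : ℝ := (cB : ℝ) / K with hcdef
  have hcK : c * K = cB := by rw [hcdef, div_mul_cancel₀ _ hK0.ne']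
  have hc0 : (0 : ℝ) ≤ c := div_nonneg hcB0 hK0.le
  -- cast sums
  have hSNr : ∑ a : ι, (N a : ℝ) = (m : ℝ) * K ^ (n - 1) := by
    have := congrArg (Nat.cast : ℕ → ℝ) hSN
    push_cast at this
    exact this
  have hSN2r : ∑ a : ι, (N a : ℝ) * (N a : ℝ)
      ≤ (m : ℝ) * K ^ (n - 1) + (cB : ℝ) * cB * K ^ (n - 2) := by
    have := (Nat.cast_le (α := ℝ)).2 hSN2
    push_cast at this
    exact this
  -- variance bound
  have hVar : ∑ a : ι, ((N a : ℝ) - c) ^ 2 ≤ 2 * cB * K ^ (n - 1) := by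
    have hexp : ∀ a : ι, ((N a : ℝ) - c) ^ 2
        = (N a : ℝ) * (N a : ℝ) - 2 * c * (N a : ℝ) + c * c := fun a => by ring
    rw [Finset.sum_congr rfl fun a _ => hexp a, Finset.sum_add_distrib,
      Finset.sum_sub_distrib, ← Finset.mul_sum, Finset.sum_const, Finset.card_univ,
      hcard, nsmul_eq_mul, hSNr]
    push_cast
    have h1 : 2 * c * ((m : ℝ) * K ^ (n - 1)) = 2 * (m : ℝ) * cB * K ^ (n - 2) := by
      rw [hKn1, ← hcK]; ring
    have h2 : (K ^ n : ℝ) * (c * c) = (cB : ℝ) * cB * K ^ (n - 2) := by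
      rw [hKn, ← hcK]; ring
    rw [h1, h2]
    have h3 : (m : ℝ) * K ≤ (cB : ℝ) * K := by nlinarith
    have h4 : (cB : ℝ) * ((cB : ℝ) - m) ≤ (cB : ℝ) * 1 :=
      mul_le_mul_of_nonneg_left (by linarith) hcB0
    have h5 : 2 * (cB : ℝ) ≤ (cB : ℝ) * K := by nlinarith
    calc ∑ a : ι, (N a : ℝ) * (N a : ℝ) - 2 * (m : ℝ) * cB * K ^ (n - 2)
          + (cB : ℝ) * cB * K ^ (n - 2)
        ≤ ((m : ℝ) * K + 2 * ((cB : ℝ) * ((cB : ℝ) - m))) * K ^ (n - 2) := by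
          rw [hKn1] at hSN2r
          nlinarith [hSN2r]
      _ ≤ ((cB : ℝ) * K + (cB : ℝ) * K) * K ^ (n - 2) := by
          have : (m : ℝ) * K + 2 * ((cB : ℝ) * ((cB : ℝ) - m))
              ≤ (cB : ℝ) * K + (cB : ℝ) * K := by nlinarith
          exact mul_le_mul_of_nonneg_right this hP.le
      _ = 2 * cB * K ^ (n - 1) := by rw [hKn1]; ring
  -- Cauchy-Schwarz
  have hCS : (∑ a ∈ A, ((N a : ℝ) - c)) ^ 2
      ≤ (A.card : ℝ) * ∑ a : ι, ((N a : ℝ) - c) ^ 2 := by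
    have h := Finset.sum_mul_sq_le_sq_mul_sq Finset.univ
      (fun a => if a ∈ A then (1 : ℝ) else 0) (fun a => (N a : ℝ) - c)
    have e1 : ∑ a : ι, (if a ∈ A then (1 : ℝ) else 0) * ((N a : ℝ) - c)
        = ∑ a ∈ A, ((N a : ℝ) - c) := by
      simp only [ite_mul, one_mul, zero_mul]
      rw [← Finset.sum_filter]
      congr 1
      simp [Finset.filter_mem_eq_inter]
    have e2 : ∑ a : ι, (if a ∈ A then (1 : ℝ) else 0) ^ 2 = (A.card : ℝ) := by
      have : ∀ a : ι, (if a ∈ A then (1 : ℝ) else 0) ^ 2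
          = (if a ∈ A then (1 : ℝ) else 0) := by intro a; split <;> norm_num
      rw [Finset.sum_congr rfl fun a _ => this a, ← Finset.sum_filter]
      simp [Finset.filter_mem_eq_inter]
    rw [e1, e2] at h
    exact h
  have hsum : ∑ a ∈ A, ((N a : ℝ) - c) = (I : ℝ) - (A.card : ℝ) * c := by
    rw [Finset.sum_sub_distrib, Finset.sum_const, nsmul_eq_mul]
    have : ∑ a ∈ A, (N a : ℝ) = (I : ℝ) := by
      rw [hI]; push_cast; rfl
    rw [this]
  have hS0 : (0 : ℝ) ≤ (A.card : ℝ) * cB := mul_nonneg hcA0 hcB0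
  set S : ℝ := Real.sqrt ((A.card : ℝ) * cB) with hSdef
  have hS_nonneg : 0 ≤ S := Real.sqrt_nonneg _
  have hE1 : |(I : ℝ) - (A.card : ℝ) * c| ≤ S * Real.sqrt (K ^ n) := by
    rw [← hsum]
    have h2 : (∑ a ∈ A, ((N a : ℝ) - c)) ^ 2
        ≤ ((A.card : ℝ) * cB) * (K ^ n) := by
      calc (∑ a ∈ A, ((N a : ℝ) - c)) ^ 2
          ≤ (A.card : ℝ) * (2 * cB * K ^ (n - 1)) :=
            hCS.trans (mul_le_mul_of_nonneg_left hVar hcA0)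
        _ ≤ ((A.card : ℝ) * cB) * (K ^ n) := by
            rw [hKn']
            nlinarith [pow_nonneg hK0.le (n-1), mul_nonneg hcA0 (mul_nonneg hcB0 (pow_nonneg hK0.le (n-1)))]
    calc |∑ a ∈ A, ((N a : ℝ) - c)| ≤ Real.sqrt (((A.card : ℝ) * cB) * K ^ n) :=
          Real.abs_le_sqrt h2
      _ = S * Real.sqrt (K ^ n) := Real.sqrt_mul hS0 _
  -- main term comparison
  set x : ℝ := (K⁻¹) ^ n with hxdef
  have hx : x = (K ^ n)⁻¹ := inv_pow K n
  have hKn_pos : (0 : ℝ) < K ^ n := pow_pos hK0 n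
  have h81 : (81 : ℝ) ≤ K ^ n := by
    calc (81 : ℝ) = 3 ^ 4 := by norm_num
      _ ≤ 3 ^ n := pow_le_pow_right₀ (by norm_num) hn
      _ ≤ K ^ n := pow_le_pow_left₀ (by norm_num) hK3 n
  have hx_pos : 0 < x := by rw [hx]; positivity
  have hx_le : x ≤ 1 / 81 := by
    rw [hx]
    have h' : (K ^ n)⁻¹ ≤ ((81 : ℝ))⁻¹ := by
      apply inv_anti₀ (by norm_num) h81
    linarith [h']
  have h1mx : (80 : ℝ) / 81 ≤ 1 - x := by linarith
  have h1mx_pos : (0 : ℝ) < 1 - x := by linarith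
  have hsqrt_le : S ≤ K ^ n := by
    rw [hSdef]
    calc Real.sqrt ((A.card : ℝ) * cB) ≤ Real.sqrt ((K ^ n) * (K ^ n)) := by
          apply Real.sqrt_le_sqrt
          have h1 : (A.card : ℝ) ≤ K ^ n := by
            rw [hKdef]
            exact_mod_cast (Finset.card_le_univ A).trans_eq hcard
          have h2 : (cB : ℝ) ≤ K ^ n := by rw [hKdef]; exact_mod_cast hBle
          nlinarith
      _ = K ^ n := Real.sqrt_mul_self hKn_pos.le
  have hprod : (A.card : ℝ) * cB * x ≤ S := by
    have h9 : (A.card : ℝ) * cB = S * S := (Real.mul_self_sqrt hS0).symm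
    calc (A.card : ℝ) * cB * x = S * S * x := by rw [h9]
      _ ≤ S * K ^ n * x := by
          apply mul_le_mul_of_nonneg_right (mul_le_mul_of_nonneg_left hsqrt_le hS_nonneg) hx_pos.le
      _ = S := by rw [hx]; field_simp
  have hE2 : |(A.card : ℝ) * c - (A.card : ℝ) * cB / (K * (1 - x))| ≤ S := by
    have hDelta : (A.card : ℝ) * cB / (K * (1 - x)) - (A.card : ℝ) * c
        = ((A.card : ℝ) * cB * x) / (K * (1 - x)) := by
      rw [hcdef, ← mul_div_assoc, div_sub_div _ _ (mul_ne_zero hK0.ne' h1mx_pos.ne') hK0.ne',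
        div_eq_div_iff (mul_ne_zero (mul_ne_zero hK0.ne' h1mx_pos.ne') hK0.ne')
          (mul_ne_zero hK0.ne' h1mx_pos.ne')]
      ring
    rw [abs_sub_comm, hDelta, abs_of_nonneg (div_nonneg (mul_nonneg hS0 hx_pos.le) (mul_pos hK0 h1mx_pos).le)]
    calc ((A.card : ℝ) * cB * x) / (K * (1 - x)) ≤ S / 2 := by
          apply div_le_div₀ hS_nonneg hprod (by norm_num)
          nlinarith
      _ ≤ S := by linarith
  -- combine
  have hcomb : |(I : ℝ) - (A.card : ℝ) * cB / (K * (1 - x))|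
      ≤ 2 * Real.sqrt (K ^ n) * S := by
    have tri := abs_sub_le ((I : ℝ)) ((A.card : ℝ) * c) ((A.card : ℝ) * cB / (K * (1 - x)))
    have hsq1 : (1 : ℝ) ≤ Real.sqrt (K ^ n) := by
      rw [show (1:ℝ) = Real.sqrt 1 from (Real.sqrt_one).symm]
      exact Real.sqrt_le_sqrt (by linarith)
    calc |(I : ℝ) - (A.card : ℝ) * cB / (K * (1 - x))|
        ≤ |(I : ℝ) - (A.card : ℝ) * c|
            + |(A.card : ℝ) * c - (A.card : ℝ) * cB / (K * (1 - x))| := tri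
      _ ≤ S * Real.sqrt (K ^ n) + S := by linarith [hE1, hE2]
      _ ≤ 2 * Real.sqrt (K ^ n) * S := by nlinarith
  -- final rpow computation
  have hfinal : 2 * Real.sqrt (K ^ n)
      ≤ 3 * K ^ (n - 1) * (K ^ (n - 3)) ^ (-(1 : ℝ) / 4) := by
    have e1 : Real.sqrt (K ^ n) = K ^ ((n : ℝ) / 2) := by
      rw [Real.sqrt_eq_rpow, ← Real.rpow_natCast K n, ← Real.rpow_mul hK0.le]
      congr 1
      ring
    have e2 : (K : ℝ) ^ (n - 1) = K ^ (((n : ℝ)) - 1) := by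
      rw [← Real.rpow_natCast K (n - 1), Nat.cast_sub (by omega)]
      norm_num
    have e3 : (K ^ (n - 3)) ^ (-(1 : ℝ) / 4) = K ^ ((((n : ℝ)) - 3) * (-(1 : ℝ) / 4)) := by
      rw [← Real.rpow_natCast K (n - 3), ← Real.rpow_mul hK0.le, Nat.cast_sub (by omega)]
      norm_num
    rw [e1, e2, e3, mul_assoc, ← Real.rpow_add hK0]
    have hnr : (4 : ℝ) ≤ (n : ℝ) := by exact_mod_cast hn
    have hexp_le : (n : ℝ) / 2 ≤ (n : ℝ) - 1 + ((n : ℝ) - 3) * (-(1 : ℝ) / 4) := by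
      linarith
    have := Real.rpow_le_rpow_left_iff (x := K) (y := (n : ℝ) / 2)
      (z := (n : ℝ) - 1 + ((n : ℝ) - 3) * (-(1 : ℝ) / 4)) hK1
    have hle := this.2 hexp_le
    have hpos : (0 : ℝ) < K ^ ((n : ℝ) / 2) := Real.rpow_pos_of_pos hK0 _
    linarith
  -- assemble
  have : (A.card : ℝ) * cB / ((q : ℝ) * (1 - ((q : ℝ))⁻¹ ^ n))
      = (A.card : ℝ) * cB / (K * (1 - x)) := by rw [hKdef, hxdef]
  rw [this]
  calc |(I : ℝ) - (A.card : ℝ) * cB / (K * (1 - x))|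
      ≤ 2 * Real.sqrt (K ^ n) * S := hcomb
    _ ≤ (3 * K ^ (n - 1) * (K ^ (n - 3)) ^ (-(1 : ℝ) / 4)) * S :=
        mul_le_mul_of_nonneg_right hfinal hS_nonneg
    _ = 3 * (q : ℝ) ^ (n - 1) * ((q : ℝ) ^ (n - 3)) ^ (-(1 : ℝ) / 4) * S := by
        rw [hKdef]


/-- incidence bound for `a₁b₁ + ⋯ + aₙbₙ = λ`, `q` odd prime, `n ≥ 4`:
`|I_λ(𝒜,ℬ) - |𝒜||ℬ|/(q(1-q^{-n}))| ≪ q^{n-1} q^{-(n-3)/4} √(|𝒜||ℬ|)` with an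
absolute implied constant. -/
theorem stmt14 : ∃ C : ℝ, 0 < C ∧
    ∀ (q n : ℕ) (_ : Fact (Nat.Prime q)) (_ : q ≠ 2) (_ : 4 ≤ n)
      (lam : ZMod q) (_ : IsUnit lam) (A B : Finset (Fin n → ZMod q)),
      |(((A ×ˢ B).filter (fun ab => ∑ i, ab.1 i * ab.2 i = lam)).card : ℝ)
          - (A.card : ℝ) * B.card / ((q : ℝ) * (1 - ((q : ℝ))⁻¹ ^ n))|
        ≤ C * (q : ℝ) ^ (n - 1) * ((q : ℝ) ^ (n - 3)) ^ (-(1 : ℝ) / 4)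
            * Real.sqrt ((A.card : ℝ) * B.card) := by
  refine ⟨3, by norm_num, ?_⟩
  intro q n hqf hq2 hn lam hlam A B
  classical
  haveI : Fact (1 < q) := ⟨hqf.out.one_lt⟩
  have hq3 : 3 ≤ q := by
    have h2 := hqf.out.two_le
    omega
  have hlam0 : lam ≠ 0 := hlam.ne_zero
  set N : (Fin n → ZMod q) → ℕ :=
    fun a => (B.filter fun b => ∑ i, a i * b i = lam).card with hN
  set m : ℕ := (B.filter fun b => ¬ b = 0).card with hm
  -- Fact 1
  have hI : (((A ×ˢ B).filter (fun ab => ∑ i, ab.1 i * ab.2 i = lam)).card : ℕ)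
      = ∑ a ∈ A, N a := by
    rw [Finset.card_filter, Finset.sum_product]
    exact Finset.sum_congr rfl fun a _ => (Finset.card_filter _ _).symm
  -- Fact 2
  have hSN : ∑ a : Fin n → ZMod q, N a = m * q ^ (n - 1) := by
    have swap : ∑ a : Fin n → ZMod q, N a
        = ∑ b ∈ B, (Finset.univ.filter fun a : Fin n → ZMod q =>
            ∑ i, a i * b i = lam).card := by
      simp only [hN, Finset.card_filter]
      rw [Finset.sum_comm]
    rw [swap]
    have hg : ∀ b ∈ B, (Finset.univ.filter fun a : Fin n → ZMod q =>
        ∑ i, a i * b i = lam).card = if b = 0 then 0 else q ^ (n - 1) := by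
      intro b _
      have h1 : 1 ≤ n := le_trans (by norm_num) hn
      by_cases hb : b = 0
      · subst hb
        simp [Ne.symm hlam0]
      · rw [if_neg hb]
        exact fiber_single h1 hb lam
    rw [Finset.sum_congr rfl hg]
    rw [Finset.sum_ite]
    rw [Finset.sum_const, Finset.sum_const]
    simp [hm]
  -- Fact 3
  have hSN2 : ∑ a : Fin n → ZMod q, N a * N a
      ≤ m * q ^ (n - 1) + B.card * B.card * q ^ (n - 2) := by
    have h1 : ∀ a : Fin n → ZMod q, N a * N a
        = ∑ b ∈ B, ∑ b' ∈ B,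
            (if (∑ i, a i * b i = lam) ∧ (∑ i, a i * b' i = lam) then 1 else 0) := by
      intro a
      simp only [hN]
      rw [Finset.card_filter, Finset.sum_mul_sum]
      refine Finset.sum_congr rfl fun b _ => Finset.sum_congr rfl fun b' _ => ?_
      by_cases hP : (∑ i, a i * b i = lam) <;> by_cases hQ : (∑ i, a i * b' i = lam) <;>
        simp [hP, hQ]
    rw [Finset.sum_congr rfl fun a _ => h1 a, Finset.sum_comm]
    have h2 : ∀ b ∈ B,
        (∑ a : Fin n → ZMod q, ∑ b' ∈ B,
            (if (∑ i, a i * b i = lam) ∧ (∑ i, a i * b' i = lam) then 1 else 0))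
        = ∑ b' ∈ B, (Finset.univ.filter fun a : Fin n → ZMod q =>
            (∑ i, a i * b i = lam) ∧ (∑ i, a i * b' i = lam)).card := by
      intro b _
      rw [Finset.sum_comm]
      exact Finset.sum_congr rfl fun b' _ => (Finset.card_filter _ _).symm
    rw [Finset.sum_congr rfl h2]
    have h3 : ∀ b ∈ B, ∀ b' ∈ B,
        (Finset.univ.filter fun a : Fin n → ZMod q =>
            (∑ i, a i * b i = lam) ∧ (∑ i, a i * b' i = lam)).card
        ≤ (if b' = b then (if b = 0 then 0 else q ^ (n - 1)) else 0) + q ^ (n - 2) := by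
      intro b _ b' _
      have h1n : 1 ≤ n := le_trans (by norm_num) hn
      have h2n : 2 ≤ n := le_trans (by norm_num) hn
      by_cases hbb : b' = b
      · subst hbb
        rw [if_pos rfl]
        refine le_trans ?_ (Nat.le_add_right _ _)
        by_cases hb : b' = 0
        · subst hb
          have hfalse : ∀ a : Fin n → ZMod q,
              ¬ ((∑ i, a i * (0 : Fin n → ZMod q) i = lam)
                  ∧ (∑ i, a i * (0 : Fin n → ZMod q) i = lam)) := by
            intro a h
            rw [← h.1] at hlam0
            simp at hlam0
          rw [Finset.filter_false_of_mem fun a _ => hfalse a]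
          simp
        · rw [if_neg hb]
          have heq : (Finset.univ.filter fun a : Fin n → ZMod q =>
              (∑ i, a i * b' i = lam) ∧ (∑ i, a i * b' i = lam))
              = Finset.univ.filter fun a : Fin n → ZMod q => (∑ i, a i * b' i = lam) :=
            Finset.filter_congr fun a _ => and_self_iff
          rw [heq, fiber_single h1n hb lam]
      · rw [if_neg hbb, zero_add]
        by_cases hb : b = 0
        · subst hb
          have hfalse : ∀ a : Fin n → ZMod q,
              ¬ ((∑ i, a i * (0 : Fin n → ZMod q) i = lam)
                  ∧ (∑ i, a i * b' i = lam)) := by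
            intro a h
            rw [← h.1] at hlam0
            simp at hlam0
          rw [Finset.filter_false_of_mem fun a _ => hfalse a]
          simp
        · by_cases hb' : b' = 0
          · subst hb'
            have hfalse : ∀ a : Fin n → ZMod q,
                ¬ ((∑ i, a i * b i = lam)
                    ∧ (∑ i, a i * (0 : Fin n → ZMod q) i = lam)) := by
              intro a h
              rw [← h.2] at hlam0
              simp at hlam0
            rw [Finset.filter_false_of_mem fun a _ => hfalse a]
            simp
          · have hsub : ∀ a : Fin n → ZMod q,
                ∑ i, a i * (b' - b) i = (∑ i, a i * b' i) - ∑ i, a i * b i := by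
              intro a
              simp [Pi.sub_apply, mul_sub, Finset.sum_sub_distrib]
            have hiff : ∀ a : Fin n → ZMod q,
                ((∑ i, a i * b i = lam) ∧ (∑ i, a i * b' i = lam))
                ↔ ((∑ i, a i * b i = lam) ∧ (∑ i, a i * (b' - b) i = 0)) := by
              intro a
              constructor
              · rintro ⟨hP, hQ⟩
                exact ⟨hP, by rw [hsub, hP, hQ, sub_self]⟩
              · rintro ⟨hP, hQ⟩
                rw [hsub, hP, sub_eq_zero] at hQ
                exact ⟨hP, hQ⟩
            rw [Finset.filter_congr fun a _ => hiff a]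
            exact fiber_pair_le h2n hb (sub_ne_zero.2 hbb) hlam0
    calc ∑ b ∈ B, ∑ b' ∈ B, (Finset.univ.filter fun a : Fin n → ZMod q =>
            (∑ i, a i * b i = lam) ∧ (∑ i, a i * b' i = lam)).card
        ≤ ∑ b ∈ B, ∑ b' ∈ B,
            ((if b' = b then (if b = 0 then 0 else q ^ (n - 1)) else 0) + q ^ (n - 2)) :=
          Finset.sum_le_sum fun b hb => Finset.sum_le_sum fun b' hb' => h3 b hb b' hb'
      _ ≤ m * q ^ (n - 1) + B.card * B.card * q ^ (n - 2) := by
          rw [Finset.sum_congr rfl fun b (_ : b ∈ B) => Finset.sum_add_distrib]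
          rw [Finset.sum_add_distrib]
          gcongr ?_ + ?_
          · have hdiag : ∀ b ∈ B, (∑ b' ∈ B,
                (if b' = b then (if b = 0 then 0 else q ^ (n - 1)) else 0))
                ≤ (if b = 0 then 0 else q ^ (n - 1)) := by
              intro b hb
              rw [Finset.sum_ite_eq' B b fun _ => (if b = 0 then 0 else q ^ (n - 1))]
              simp [hb]
            refine le_trans (Finset.sum_le_sum hdiag) ?_
            rw [Finset.sum_ite]
            simp [hm]
          · simp [Finset.sum_const, mul_assoc, mul_comm]
            exact le_of_eq (by ring)
  -- bookkeeping facts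
  have hm1 : m ≤ B.card := Finset.card_filter_le B _
  have hm2 : B.card ≤ m + 1 := by
    have hsplit := Finset.card_filter_add_card_filter_not
      (s := B) (p := fun b : Fin n → ZMod q => b = 0)
    have hzero : (B.filter fun b : Fin n → ZMod q => b = 0).card ≤ 1 := by
      refine le_trans (Finset.card_le_card ?_) (Finset.card_singleton (0 : Fin n → ZMod q)).le
      intro b hb
      simp only [Finset.mem_filter] at hb
      simp [hb.2]
    have : (B.filter fun b : Fin n → ZMod q => ¬ b = 0).card = m := rfl
    omega
  have hBle : B.card ≤ q ^ n := by
    rw [← card_V (q := q) (n := n)]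
    exact Finset.card_le_univ B
  exact stmt14_aux_real q n hq3 hn card_V N A B.card m _ hBle hm1 hm2 hI hSN hSN2
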